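/- Let A be a real alternative algebra with hypercomplex basis v₀=1, v₁,…,v_m of subspace M ⊆ A, let Ω ⊆ ℝ^{m+1} be open, and suppose φ = ∑_{s=0}^m φₛ vₛ : Ω → M is C¹ with ∂ₛφ_t = ∂_tφₛ for all 1 ≤ s,t ≤ m. Then for every a ∈ A and every point of Ω, the Cauchy–Riemann operator applied to φ·a factors: ∂̄_B(φ a) = (∂̄_B φ) a, where ∂̄_B f := ∑_{s=0}^m vₛ ∂ₛf. -/

import Mathlib

/-- Let `A` be a (finite-dimensional, normed) real alternative algebra with multiplication
the continuous bilinear map `μ` and unity `e`, with hypercomplex basis `v 0 = e, v 1, …, v m`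
of a subspace of `A`.  If `φ = ∑ s, φs s • v s : Ω → M` is `C¹` on the open set
`Ω ⊆ ℝ^{m+1}` and `∂ₛ φ_t = ∂_t φₛ` for all `1 ≤ s, t ≤ m`, then for every `a ∈ A` and
every point of `Ω` the Cauchy–Riemann operator factors: `∂̄_B(φ a) = (∂̄_B φ) a`. -/
theorem cauchyRiemann_factor_right_mul {A : Type*} [NormedAddCommGroup A] [NormedSpace ℝ A]
    [FiniteDimensional ℝ A]
    (μ : A →L[ℝ] A →L[ℝ] A) (e : A)
    (he : ∀ a : A, μ e a = a ∧ μ a e = a)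
    (hLA : ∀ a b : A, μ (μ a a) b = μ a (μ a b))
    (hRA : ∀ a b : A, μ (μ a b) b = μ a (μ b b))
    (m : ℕ) (hm : 1 ≤ m) (v : Fin (m + 1) → A)
    (hv0 : v 0 = e)
    (hvsq : ∀ s, s ≠ 0 → μ (v s) (v s) = -e)
    (hvanti : ∀ s t, s ≠ 0 → t ≠ 0 → s ≠ t → μ (v s) (v t) = -μ (v t) (v s))
    (Ω : Set ((Fin (m + 1)) → ℝ)) (hΩ : IsOpen Ω)
    (φs : Fin (m + 1) → ((Fin (m + 1)) → ℝ) → ℝ)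
    (hC1 : ∀ t, ContDiffOn ℝ 1 (φs t) Ω)
    (hsym : ∀ s t : Fin (m + 1), s ≠ 0 → t ≠ 0 → ∀ p ∈ Ω,
      fderiv ℝ (φs t) p (Pi.single s 1) = fderiv ℝ (φs s) p (Pi.single t 1))
    (a : A) (p : (Fin (m + 1)) → ℝ) (hp : p ∈ Ω) :
    ∑ s, μ (v s) (fderiv ℝ (fun q => μ (∑ t, φs t q • v t) a) p (Pi.single s 1)) =
      μ (∑ s, μ (v s) (fderiv ℝ (fun q => ∑ t, φs t q • v t) p (Pi.single s 1))) a := by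
  classical
  have hd : ∀ t, DifferentiableAt ℝ (φs t) p := fun t =>
    ((hC1 t).differentiableOn one_ne_zero).differentiableAt (hΩ.mem_nhds hp)
  set d : Fin (m+1) → Fin (m+1) → ℝ := fun s t => fderiv ℝ (φs t) p (Pi.single s 1) with hdm
  have hfd : ∀ (c : Fin (m+1) → A) (w : Fin (m+1) → ℝ),
      fderiv ℝ (fun q => ∑ t, φs t q • c t) p w = ∑ t, fderiv ℝ (φs t) p w • c t := by
    intro c w
    have h : HasFDerivAt (fun q => ∑ t, φs t q • c t)
        (∑ t, (fderiv ℝ (φs t) p).smulRight (c t)) p :=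
      HasFDerivAt.fun_sum (fun t _ => ((hd t).hasFDerivAt).smul_const (c t))
    rw [h.fderiv]
    simp
  have hfun : (fun q => μ (∑ t, φs t q • v t) a) = fun q => ∑ t, φs t q • μ (v t) a := by
    funext q
    simp
  rw [hfun]
  have hL : ∀ s, fderiv ℝ (fun q => ∑ t, φs t q • μ (v t) a) p (Pi.single s 1)
      = ∑ t, d s t • μ (v t) a := fun s => hfd _ _
  have hR : ∀ s, fderiv ℝ (fun q => ∑ t, φs t q • v t) p (Pi.single s 1)
      = ∑ t, d s t • v t := fun s => hfd _ _
  simp only [hL, hR, map_sum, map_smul, ContinuousLinearMap.sum_apply,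
    ContinuousLinearMap.smul_apply]
  -- Goal: ∑ s, ∑ t, d s t • μ (v s) (μ (v t) a) = ∑ s, ∑ t, d s t • μ (μ (v s) (v t)) a
  set N : A → A → A := fun x y => μ x (μ y a) - μ (μ x y) a with hN
  have hNdiag : ∀ x, N x x = 0 := by
    intro x; simp [hN, hLA x a]
  have hNskew : ∀ x y, N x y = -N y x := by
    intro x y
    have hexp : N (x+y) (x+y) = N x x + (N x y + N y x) + N y y := by
      simp only [hN, map_add, ContinuousLinearMap.add_apply]
      abel
    rw [hNdiag, hNdiag, hNdiag, zero_add, add_zero] at hexp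
    exact eq_neg_of_add_eq_zero_left hexp.symm
  have hN0l : ∀ x, N (v 0) x = 0 := by
    intro x; simp [hN, hv0, (he x).1, (he ((μ x) a)).1]
  have hN0r : ∀ x, N x (v 0) = 0 := by
    intro x; simp [hN, hv0, (he x).2, (he a).1]
  set f : Fin (m+1) → Fin (m+1) → A := fun s t => d s t • N (v s) (v t) with hf
  have hkey : ∀ s t, f s t = -f t s := by
    intro s t
    by_cases hs : s = 0
    · subst hs; simp [hf, hN0l, hN0r]
    by_cases ht : t = 0
    · subst ht; simp [hf, hN0l, hN0r]
    have hdst : d s t = d t s := hsym s t hs ht p hp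
    rw [hf]
    simp only [hdst, hNskew (v s) (v t), smul_neg]
  have hS : (∑ s, ∑ t, f s t) = 0 := by
    have h1 : (∑ s, ∑ t, f s t) = -(∑ s, ∑ t, f s t) := by
      calc (∑ s, ∑ t, f s t) = ∑ t, ∑ s, f s t := Finset.sum_comm
        _ = ∑ t, ∑ s, -(f t s) := by
              refine Finset.sum_congr rfl fun t _ => Finset.sum_congr rfl fun s _ => hkey s t
        _ = -(∑ s, ∑ t, f s t) := by simp
    have h2 : (2:ℝ) • (∑ s, ∑ t, f s t) = 0 := by
      rw [two_smul]
      exact add_eq_zero_iff_eq_neg.mpr h1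
    simpa using h2
  have hsplit : (∑ s, ∑ t : Fin (m+1), d s t • μ (v s) (μ (v t) a))
      - (∑ s, ∑ t : Fin (m+1), d s t • μ (μ (v s) (v t)) a) = ∑ s, ∑ t, f s t := by
    rw [← Finset.sum_sub_distrib]
    refine Finset.sum_congr rfl fun s _ => ?_
    rw [← Finset.sum_sub_distrib]
    refine Finset.sum_congr rfl fun t _ => ?_
    simp [hf, hN, smul_sub]
  rw [← sub_eq_zero]
  rw [hsplit] at *
  exact hsplit ▸ hS
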